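/- Let σ be differentiable, and suppose a network satisfies approximate interpolation ‖Z_L − Y‖_F ≤ ε1 with ε1 < s_K(Y) and bounded weights ‖W_ℓ‖_op ≤ r for every ℓ ∈ {L1+1,…,L}. Then the NTK operator norm is lower bounded as ‖Θ‖_op ≥ (s_K(Y) − ε1)² · L2 / (K² r²), where L2 is the number of linear layers. -/

import Mathlib

open Matrix Finset Real

/-- Frobenius norm of a real matrix. -/
noncomputable def frobNorm {m n : ℕ} (A : Matrix (Fin m) (Fin n) ℝ) : ℝ :=
  Real.sqrt (∑ i, ∑ j, (A i j) ^ 2)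

/-- Operator (spectral) norm of a real matrix. -/
noncomputable def opNorm {m n : ℕ} (A : Matrix (Fin m) (Fin n) ℝ) : ℝ :=
  sSup {x : ℝ | ∃ v : Fin n → ℝ, (∑ i, v i ^ 2) ≤ 1 ∧ x = Real.sqrt (∑ i, (A.mulVec v i) ^ 2)}

/-- The singular values of a real matrix, in non-increasing order (indexed by columns). -/
noncomputable def svals {m n : ℕ} (A : Matrix (Fin m) (Fin n) ℝ) : Fin n → ℝ := fun i =>
  Real.sqrt ((show (Aᵀ * A).IsHermitian by
      rw [← Matrix.conjTranspose_eq_transpose_of_trivial]; exact Matrix.isHermitian_conjTranspose_mul_self A).eigenvalues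
    (Tuple.sort ((show (Aᵀ * A).IsHermitian by
      rw [← Matrix.conjTranspose_eq_transpose_of_trivial]; exact Matrix.isHermitian_conjTranspose_mul_self A).eigenvalues) i.rev))

/-- `sval A k` is the `k`-th largest singular value of `A` (1-indexed). -/
noncomputable def sval {m n : ℕ} (A : Matrix (Fin m) (Fin n) ℝ) (k : ℕ) : ℝ :=
  if h : k - 1 < n then svals A ⟨k - 1, h⟩ else 0

/-- Smallest singular value of a (possibly rectangular) matrix. -/
noncomputable def smin {m n : ℕ} (A : Matrix (Fin m) (Fin n) ℝ) : ℝ :=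
  sval A (min m n)

/-- Condition number: the ratio between the largest and the smallest *nonzero*
singular values, i.e. the supremum of ratios of nonzero singular values. -/
noncomputable def kappa {m n : ℕ} (A : Matrix (Fin m) (Fin n) ℝ) : ℝ :=
  sSup {x : ℝ | ∃ i j : Fin n, svals A i ≠ 0 ∧ svals A j ≠ 0 ∧ x = svals A i / svals A j}

/-- The space of all network parameters: the coordinate `p : Fin L` holds the entries of the
weight matrix of layer `p + 1`. -/
abbrev ParamSpace (n : ℕ → ℕ) (L : ℕ) :=
  PiLp 2 (fun p : Fin L => EuclideanSpace ℝ (Fin (n (p.1 + 1)) × Fin (n p.1)))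

/-- The weight matrix of layer `p + 1` extracted from the parameter vector `θ`. -/
noncomputable def WofE {n : ℕ → ℕ} {L : ℕ} (θ : ParamSpace n L) (p : Fin L) :
    Matrix (Fin (n (p.1 + 1))) (Fin (n p.1)) ℝ :=
  Matrix.of fun i j => θ p (i, j)

/-- The layer outputs of the network with parameters `θ` (layers `1,…,L1` are nonlinear with
activation `σ`, the remaining ones are linear). -/
noncomputable def netZE {n : ℕ → ℕ} {L : ℕ} {N : ℕ} (σ : ℝ → ℝ) (L1 : ℕ)
    (X : Matrix (Fin (n 0)) (Fin N) ℝ) (θ : ParamSpace n L) :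
    (ℓ : ℕ) → Matrix (Fin (n ℓ)) (Fin N) ℝ
  | 0 => X
  | (p + 1) =>
    if h : p < L then
      (if p + 1 ≤ L1 then (WofE θ ⟨p, h⟩ * netZE σ L1 X θ p).map σ
       else WofE θ ⟨p, h⟩ * netZE σ L1 X θ p)
    else 0

/-- Operator norm of the empirical neural tangent kernel at parameters `θ`:
`sup_{A ≠ 0} ‖∇_θ Tr[Z_L Aᵀ]‖² / ‖A‖_F²`. -/
noncomputable def NTKop (n : ℕ → ℕ) (L N : ℕ) (σ : ℝ → ℝ) (L1 : ℕ)
    (X : Matrix (Fin (n 0)) (Fin N) ℝ) (θ : ParamSpace n L) : ℝ :=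
  sSup {x : ℝ | ∃ A : Matrix (Fin (n L)) (Fin N) ℝ, A ≠ 0 ∧
    x = ‖gradient (fun ϑ => Matrix.trace (netZE σ L1 X ϑ L * Aᵀ)) θ‖ ^ 2 / frobNorm A ^ 2}

/-! ### Auxiliary lemmas -/

section AuxNorm

lemma frobNorm_nonneg {m n : ℕ} (A : Matrix (Fin m) (Fin n) ℝ) : 0 ≤ frobNorm A :=
  Real.sqrt_nonneg _

lemma frobNorm_sq {m n : ℕ} (A : Matrix (Fin m) (Fin n) ℝ) :
    frobNorm A ^ 2 = ∑ i, ∑ j, (A i j) ^ 2 := by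
  rw [frobNorm, Real.sq_sqrt]
  positivity

lemma opNorm_bddAbove {m n : ℕ} (A : Matrix (Fin m) (Fin n) ℝ) :
    ∀ x ∈ {x : ℝ | ∃ v : Fin n → ℝ, (∑ i, v i ^ 2) ≤ 1 ∧
      x = Real.sqrt (∑ i, (A.mulVec v i) ^ 2)}, x ≤ frobNorm A := by
  rintro x ⟨v, hv, rfl⟩
  rw [frobNorm]
  apply Real.sqrt_le_sqrt
  apply Finset.sum_le_sum
  intro i _
  calc (A.mulVec v i)^2 ≤ (∑ j, (A i j)^2) * (∑ j, v j ^2) := by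
        simpa [Matrix.mulVec, dotProduct] using
          Finset.sum_mul_sq_le_sq_mul_sq Finset.univ (A i) v
    _ ≤ ∑ j, (A i j)^2 := by
        apply mul_le_of_le_one_right (by positivity) hv

lemma opNorm_nonneg {m n : ℕ} (A : Matrix (Fin m) (Fin n) ℝ) : 0 ≤ opNorm A := by
  apply le_csSup ⟨frobNorm A, fun x hx => opNorm_bddAbove A x hx⟩
  exact ⟨0, by simp, by simp [Matrix.mulVec_zero]⟩

lemma mulVec_sq_le {m n : ℕ} (A : Matrix (Fin m) (Fin n) ℝ) (x : Fin n → ℝ) :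
    Real.sqrt (∑ i, (A.mulVec x i) ^ 2) ≤ opNorm A * Real.sqrt (∑ j, x j ^ 2) := by
  set c := Real.sqrt (∑ j, x j ^ 2) with hc
  have hcnn : 0 ≤ c := Real.sqrt_nonneg _
  have hsum : (∑ j, x j ^ 2) = c ^ 2 := (Real.sq_sqrt (by positivity)).symm
  rcases eq_or_lt_of_le hcnn with h0 | h0
  · have hs : (∑ j, x j ^ 2) = 0 := by rw [hsum, ← h0]; ring
    have hx : x = 0 := by
      funext j
      have := (Finset.sum_eq_zero_iff_of_nonneg
        (fun j (_ : j ∈ Finset.univ) => sq_nonneg (x j))).mp hs j (Finset.mem_univ j)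
      exact pow_eq_zero_iff (n := 2) (by norm_num) |>.mp this
    subst hx
    simp [Matrix.mulVec_zero, ← h0]
  · have hmem : Real.sqrt (∑ i, (A.mulVec (c⁻¹ • x) i) ^ 2) ≤ opNorm A := by
      apply le_csSup ⟨frobNorm A, fun y hy => opNorm_bddAbove A y hy⟩
      refine ⟨c⁻¹ • x, ?_, rfl⟩
      have : (∑ j, (c⁻¹ • x) j ^ 2) = c⁻¹ ^ 2 * ∑ j, x j ^ 2 := by
        simp [Finset.mul_sum, mul_pow]
      rw [this, hsum]
      rw [inv_pow, inv_mul_cancel₀ (by positivity)]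
    have hsmul : A.mulVec (c⁻¹ • x) = c⁻¹ • A.mulVec x := by
      rw [Matrix.mulVec_smul]
    have heq : Real.sqrt (∑ i, (A.mulVec (c⁻¹ • x) i) ^ 2)
        = c⁻¹ * Real.sqrt (∑ i, (A.mulVec x i) ^ 2) := by
      rw [hsmul]
      have : (∑ i, (c⁻¹ • A.mulVec x) i ^ 2) = c⁻¹ ^ 2 * ∑ i, (A.mulVec x i) ^ 2 := by
        simp [Finset.mul_sum, mul_pow]
      rw [this, Real.sqrt_mul (by positivity), Real.sqrt_sq (by positivity)]
    rw [heq] at hmem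
    calc Real.sqrt (∑ i, (A.mulVec x i) ^ 2)
        = c * (c⁻¹ * Real.sqrt (∑ i, (A.mulVec x i) ^ 2)) := by
          field_simp
      _ ≤ c * opNorm A := by
          apply mul_le_mul_of_nonneg_left hmem hcnn
      _ = opNorm A * c := mul_comm _ _

lemma svals_le_of_quadform {m n : ℕ} (Y : Matrix (Fin m) (Fin n) ℝ) (c : ℝ)
    (hq : ∀ w : Fin n → ℝ, (∑ i, (Y.mulVec w i) ^ 2) ≤ c * ∑ j, w j ^ 2) (i : Fin n) :
    svals Y i ≤ Real.sqrt c := by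
  apply Real.sqrt_le_sqrt
  set hA := (show (Yᵀ * Y).IsHermitian by
    rw [← Matrix.conjTranspose_eq_transpose_of_trivial]; exact Matrix.isHermitian_conjTranspose_mul_self Y)
  set j := Tuple.sort hA.eigenvalues i.rev
  set w : EuclideanSpace ℝ (Fin n) := hA.eigenvectorBasis j with hw
  have hmv : (Yᵀ * Y) *ᵥ ⇑w = hA.eigenvalues j • ⇑w := hA.mulVec_eigenvectorBasis j
  have hnorm : (∑ k, w k ^ 2) = 1 := by
    have h1 : ‖w‖ = 1 := hA.eigenvectorBasis.orthonormal.1 j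
    have h2 : ‖w‖ = Real.sqrt (∑ k, w k ^ 2) := by
      rw [EuclideanSpace.norm_eq]
      congr 1
      apply Finset.sum_congr rfl
      intro k _
      rw [Real.norm_eq_abs, sq_abs]
    rw [h2] at h1
    nlinarith [Real.sq_sqrt (by positivity : (0:ℝ) ≤ ∑ k, w k ^ 2), h1]
  have key : hA.eigenvalues j = ∑ i', (Y.mulVec ⇑w i') ^ 2 := by
    have lhs : ⇑w ⬝ᵥ ((Yᵀ * Y) *ᵥ ⇑w) = hA.eigenvalues j * 1 := by
      rw [hmv, dotProduct_smul]
      simp only [smul_eq_mul]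
      rw [← hnorm]
      congr 1
      simp [dotProduct, pow_two]
    have lhs2 : ⇑w ⬝ᵥ ((Yᵀ * Y) *ᵥ ⇑w) = ∑ i', (Y.mulVec ⇑w i') ^ 2 := by
      rw [← Matrix.mulVec_mulVec, Matrix.dotProduct_mulVec, Matrix.vecMul_transpose]
      simp [dotProduct, pow_two]
    rw [← lhs2, lhs, mul_one]
  rw [key]
  calc (∑ i', (Y.mulVec ⇑w i') ^ 2) ≤ c * ∑ k, w k ^ 2 := hq ⇑w
    _ = c := by rw [hnorm, mul_one]

end AuxNorm

section AuxNet

lemma diff_eval {n : ℕ → ℕ} {L : ℕ} (p : Fin L) (ik : Fin (n (p.1+1)) × Fin (n p.1)) :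
    Differentiable ℝ (fun ϑ : ParamSpace n L => ϑ p ik) := by
  have h1 : Differentiable ℝ (fun ϑ : ParamSpace n L => ϑ p) :=
    (PiLp.proj (𝕜 := ℝ) (p := 2)
      (β := fun p : Fin L => EuclideanSpace ℝ (Fin (n (p.1 + 1)) × Fin (n p.1))) p).differentiable
  have h2 : Differentiable ℝ (fun w : EuclideanSpace ℝ (Fin (n (p.1+1)) × Fin (n p.1)) => w ik) :=
    (PiLp.proj (𝕜 := ℝ) (p := 2) (β := fun _ : Fin (n (p.1+1)) × Fin (n p.1) => ℝ) ik).differentiable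
  exact h2.comp h1

variable {n : ℕ → ℕ} {L N : ℕ} (σ : ℝ → ℝ) (L1 : ℕ) (X : Matrix (Fin (n 0)) (Fin N) ℝ)

lemma netZE_succ (θ : ParamSpace n L) (p : ℕ) :
    netZE σ L1 X θ (p+1) = if h : p < L then
      (if p + 1 ≤ L1 then (WofE θ ⟨p, h⟩ * netZE σ L1 X θ p).map σ
       else WofE θ ⟨p, h⟩ * netZE σ L1 X θ p)
    else 0 := rfl

lemma diff_netZE (hσ : Differentiable ℝ σ) :
    ∀ ℓ (i : Fin (n ℓ)) (j : Fin N),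
      Differentiable ℝ (fun ϑ : ParamSpace n L => netZE σ L1 X ϑ ℓ i j) := by
  intro ℓ
  induction ℓ with
  | zero => intro i j; exact differentiable_const _
  | succ p ih =>
    intro i j
    by_cases h : p < L
    · by_cases h1 : p + 1 ≤ L1
      · have he : (fun ϑ : ParamSpace n L => netZE σ L1 X ϑ (p+1) i j)
            = fun ϑ => σ (∑ k, ϑ ⟨p,h⟩ (i,k) * netZE σ L1 X ϑ p k j) := by
          funext ϑ
          simp [netZE_succ, h, h1, Matrix.mul_apply, WofE, Matrix.map_apply]
        rw [he]
        exact hσ.comp (Differentiable.fun_sum fun k _ => (diff_eval ⟨p,h⟩ (i,k)).mul (ih k j))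
      · have he : (fun ϑ : ParamSpace n L => netZE σ L1 X ϑ (p+1) i j)
            = fun ϑ => (∑ k, ϑ ⟨p,h⟩ (i,k) * netZE σ L1 X ϑ p k j) := by
          funext ϑ
          simp [netZE_succ, h, h1, Matrix.mul_apply, WofE]
        rw [he]
        exact Differentiable.fun_sum fun k _ => (diff_eval ⟨p,h⟩ (i,k)).mul (ih k j)
    · have he : (fun ϑ : ParamSpace n L => netZE σ L1 X ϑ (p+1) i j) = fun _ => 0 := by
        funext ϑ; simp [netZE_succ, h]
      rw [he]; exact differentiable_const _

lemma netZE_congr (θ₁ θ₂ : ParamSpace n L) :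
    ∀ ℓ, (∀ p : Fin L, p.1 < ℓ → WofE θ₁ p = WofE θ₂ p) →
      netZE σ L1 X θ₁ ℓ = netZE σ L1 X θ₂ ℓ := by
  intro ℓ
  induction ℓ with
  | zero => intro _; rfl
  | succ p ih =>
    intro hp
    rw [netZE_succ, netZE_succ]
    by_cases h : p < L
    · have hWe : WofE θ₁ ⟨p, h⟩ = WofE θ₂ ⟨p, h⟩ := hp ⟨p, h⟩ (Nat.lt_succ_self p)
      have hZ : netZE σ L1 X θ₁ p = netZE σ L1 X θ₂ p :=
        ih fun q hq => hp q (Nat.lt_succ_of_lt hq)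
      simp [h, hWe, hZ]
    · simp [h]

lemma netZE_tail (θ : ParamSpace n L) :
    ∀ j ℓ, ℓ + j = L → L1 ≤ ℓ →
      ∃ B : Matrix (Fin (n L)) (Fin (n ℓ)) ℝ, ∀ ϑ : ParamSpace n L,
        (∀ p : Fin L, ℓ ≤ p.1 → WofE ϑ p = WofE θ p) →
        netZE σ L1 X ϑ L = B * netZE σ L1 X ϑ ℓ := by
  intro j
  induction j with
  | zero =>
    intro ℓ hl _
    refine ⟨(Nat.add_zero ℓ ▸ hl) ▸ (1 : Matrix (Fin (n L)) (Fin (n L)) ℝ), fun ϑ _ => ?_⟩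
    subst hl
    simp
  | succ j ih =>
    intro ℓ hl hL1
    have hℓL : ℓ < L := by omega
    obtain ⟨B', hB'⟩ := ih (ℓ+1) (by omega) (by omega)
    refine ⟨B' * WofE θ ⟨ℓ, hℓL⟩, fun ϑ hϑ => ?_⟩
    have h1 : netZE σ L1 X ϑ L = B' * netZE σ L1 X ϑ (ℓ+1) :=
      hB' ϑ fun p hp => hϑ p (by omega)
    have h2 : netZE σ L1 X ϑ (ℓ+1) = WofE ϑ ⟨ℓ, hℓL⟩ * netZE σ L1 X ϑ ℓ := by
      rw [netZE_succ]
      simp only [hℓL, dif_pos]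
      rw [if_neg (by omega)]
    rw [h1, h2, hϑ ⟨ℓ, hℓL⟩ (le_refl ℓ), Matrix.mul_assoc]

end AuxNet

lemma fderiv_dir {E : Type*} [NormedAddCommGroup E] [NormedSpace ℝ E] (f : E → ℝ) (θ d : E)
    (hf : DifferentiableAt ℝ f θ) (a b : ℝ) (hfl : ∀ t : ℝ, f (θ + t • d) = a + t * b) :
    fderiv ℝ f θ d = b := by
  have hline : HasDerivAt (fun t : ℝ => θ + t • d) d 0 := by
    simpa using ((hasDerivAt_id (0:ℝ)).smul_const d).const_add θ
  have hf' : HasFDerivAt f (fderiv ℝ f θ) (θ + (0:ℝ) • d) := by simpa using hf.hasFDerivAt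
  have h1 : HasDerivAt (fun t : ℝ => f (θ + t • d)) (fderiv ℝ f θ d) 0 := by
    have := hf'.comp_hasDerivAt 0 hline
    exact this
  have h2 : HasDerivAt (fun t : ℝ => a + t * b) b 0 := by
    simpa using ((hasDerivAt_id (0:ℝ)).mul_const b).const_add a
  have he : (fun t : ℝ => f (θ + t • d)) = fun t => a + t * b := funext hfl
  rw [he] at h1
  exact h1.unique h2

lemma inner_gradient' {E : Type*} [NormedAddCommGroup E] [InnerProductSpace ℝ E]
    [CompleteSpace E] (f : E → ℝ) (θ d : E) :
    (inner ℝ (gradient f θ) d : ℝ) = fderiv ℝ f θ d := by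
  rw [gradient]
  exact InnerProductSpace.toDual_symm_apply

lemma trace_mul_transpose_eq {m N' : ℕ} (P Q : Matrix (Fin m) (Fin N') ℝ) :
    Matrix.trace (P * Qᵀ) = ∑ x : Fin m × Fin N', P x.1 x.2 * Q x.1 x.2 := by
  rw [Fintype.sum_prod_type]
  simp [Matrix.trace, Matrix.diag, Matrix.mul_apply, Matrix.transpose_apply]

lemma trace_outer {m N' : ℕ} (P : Matrix (Fin m) (Fin N') ℝ) (u : Fin m → ℝ)
    (v : Fin N' → ℝ) :
    Matrix.trace (P * (Matrix.of fun i j => u i * v j)ᵀ) = u ⬝ᵥ (P *ᵥ v) := by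
  rw [trace_mul_transpose_eq, Fintype.sum_prod_type]
  simp only [dotProduct, Matrix.mulVec, Matrix.of_apply]
  refine Finset.sum_congr rfl fun i _ => ?_
  rw [Finset.mul_sum]
  refine Finset.sum_congr rfl fun j _ => ?_
  ring

lemma dot_outer_mulVec {m' N' : ℕ} (a : Fin m' → ℝ) (z : Fin N' → ℝ) :
    a ⬝ᵥ ((Matrix.of fun k t' => a k * z t') *ᵥ z) = (∑ k, a k ^ 2) * (∑ t, z t ^ 2) := by
  simp only [dotProduct, Matrix.mulVec, Matrix.of_apply]
  rw [Finset.sum_mul]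
  refine Finset.sum_congr rfl fun k _ => ?_
  rw [Finset.mul_sum, Finset.mul_sum]
  exact Finset.sum_congr rfl fun t _ => by ring

lemma euclid_norm_sq {ι : Type*} [Fintype ι] (x : EuclideanSpace ℝ ι) :
    ‖x‖ ^ 2 = ∑ i, x i ^ 2 := by
  rw [← real_inner_self_eq_norm_sq, PiLp.inner_apply]
  simp only [RCLike.inner_apply, conj_trivial]
  exact Finset.sum_congr rfl fun i _ => by ring
set_option maxHeartbeats 1000000 in
/-- Proposition 5.3, second part: approximate interpolation and bounded
weights force the NTK operator norm to grow linearly with the number of linear layers. -/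
theorem statement18
    (L1 L2 L : ℕ) (hL2 : 1 ≤ L2) (hLdef : L = L1 + L2)
    (n : ℕ → ℕ) (N K : ℕ) (hK : n L = K)
    (σ : ℝ → ℝ) (hσ : Differentiable ℝ σ)
    (X : Matrix (Fin (n 0)) (Fin N) ℝ)
    (Y : Matrix (Fin (n L)) (Fin N) ℝ)
    (cls : Fin N → Fin (n L))
    (hY : ∀ i j, Y i j = if i = cls j then 1 else 0)
    (θ : ParamSpace n L)
    (ε1 r : ℝ)
    -- approximate interpolation
    (hA1 : frobNorm (netZE σ L1 X θ L - Y) ≤ ε1)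
    (hε1 : ε1 < sval Y K)
    -- bounded weights of the linear layers (parameter index p corresponds to layer p+1)
    (hW : ∀ p : Fin L, L1 ≤ p.1 → opNorm (WofE θ p) ≤ r) :
    (sval Y K - ε1) ^ 2 * L2 / ((K : ℝ) ^ 2 * r ^ 2) ≤ NTKop n L N σ L1 X θ := by
  classical
  have hε0 : 0 ≤ ε1 := le_trans (frobNorm_nonneg _) hA1
  by_cases hKN : K - 1 < N
  swap
  · exfalso
    rw [sval, dif_neg hKN] at hε1
    linarith
  have hN : 0 < N := by omega
  by_cases hm0 : n L = 0
  · have hK0 : K = 0 := by omega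
    have hset : {x : ℝ | ∃ A : Matrix (Fin (n L)) (Fin N) ℝ, A ≠ 0 ∧
        x = ‖gradient (fun ϑ => Matrix.trace (netZE σ L1 X ϑ L * Aᵀ)) θ‖ ^ 2 / frobNorm A ^ 2}
        = ∅ := by
      ext x
      simp only [Set.mem_setOf_eq, Set.mem_empty_iff_false, iff_false, not_exists]
      rintro A ⟨hA, -⟩
      apply hA
      ext i j
      exact absurd i.isLt (by omega)
    rw [NTKop, hset, Real.sSup_empty, hK0]
    norm_num
  have hm : 0 < n L := Nat.pos_of_ne_zero hm0
  have hK1 : 1 ≤ K := by omega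
  -- the largest class
  obtain ⟨istar, -, hmax⟩ := Finset.exists_max_image Finset.univ
    (fun i : Fin (n L) => (Finset.univ.filter (fun j => cls j = i)).card)
    ⟨⟨0, hm⟩, Finset.mem_univ _⟩
  set c : ℕ := (Finset.univ.filter (fun j => cls j = istar)).card with hcdef
  have hc1 : 1 ≤ c := by
    have h1 : (⟨0, hN⟩ : Fin N) ∈ Finset.univ.filter (fun j => cls j = cls ⟨0, hN⟩) := by simp
    have h2 := Finset.card_pos.mpr ⟨_, h1⟩
    exact le_trans h2 (hmax _ (Finset.mem_univ _))
  have hcR : (1:ℝ) ≤ (c:ℝ) := by exact_mod_cast hc1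
  have hsqc : 0 < Real.sqrt c := Real.sqrt_pos.mpr (by linarith)
  -- quadratic form bound, hence a bound on every singular value of Y
  have hquad : ∀ w : Fin N → ℝ, (∑ i, (Y.mulVec w i)^2) ≤ (c:ℝ) * ∑ j, w j ^2 := by
    intro w
    have hmv : ∀ i : Fin (n L), Y.mulVec w i
        = ∑ j ∈ Finset.univ.filter (fun j => cls j = i), w j := by
      intro i
      rw [Finset.sum_filter]
      simp only [Matrix.mulVec, dotProduct]
      refine Finset.sum_congr rfl fun j _ => ?_
      rw [hY]
      by_cases h : cls j = i
      · simp [h]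
      · simp [h, Ne.symm h]
    calc (∑ i, (Y.mulVec w i)^2)
        = ∑ i, (∑ j ∈ Finset.univ.filter (fun j => cls j = i), w j)^2 :=
          Finset.sum_congr rfl fun i _ => by rw [hmv]
      _ ≤ ∑ i, ((Finset.univ.filter (fun j => cls j = i)).card : ℝ)
            * ∑ j ∈ Finset.univ.filter (fun j => cls j = i), w j ^ 2 :=
          Finset.sum_le_sum fun i _ => sq_sum_le_card_mul_sum_sq
      _ ≤ ∑ i, (c:ℝ) * ∑ j ∈ Finset.univ.filter (fun j => cls j = i), w j ^ 2 :=
          Finset.sum_le_sum fun i _ => mul_le_mul_of_nonneg_right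
            (by exact_mod_cast hmax i (Finset.mem_univ i))
            (Finset.sum_nonneg fun j _ => sq_nonneg _)
      _ = (c:ℝ) * ∑ i, ∑ j ∈ Finset.univ.filter (fun j => cls j = i), w j ^ 2 := by
          rw [Finset.mul_sum]
      _ = (c:ℝ) * ∑ j, w j ^ 2 := by rw [Finset.sum_fiberwise]
  have hsvalY : sval Y K ≤ Real.sqrt c := by
    rw [sval, dif_pos hKN]
    exact svals_le_of_quadform Y (c:ℝ) hquad _
  set δ : ℝ := sval Y K - ε1 with hδdef
  have hδpos : 0 < δ := by rw [hδdef]; linarith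
  -- the test matrix A = u vᵀ
  set u : Fin (n L) → ℝ := fun i => if i = istar then 1 else 0 with hudef
  set v : Fin N → ℝ := fun j => if cls j = istar then (Real.sqrt c)⁻¹ else 0 with hvdef
  have hu2 : (∑ i, u i ^ 2) = 1 := by
    have h1 : ∀ i, u i ^ 2 = if i = istar then 1 else 0 := fun i => by
      by_cases h : i = istar <;> simp [hudef, h]
    simp only [h1]
    simp
  have hvsq : ((Real.sqrt c)⁻¹)^2 = (c:ℝ)⁻¹ := by
    rw [inv_pow, Real.sq_sqrt (by positivity)]
  have hcne : (c:ℝ) ≠ 0 := by positivity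
  have hv2 : (∑ j, v j ^ 2) = 1 := by
    have h1 : ∀ j, v j ^ 2 = if cls j = istar then (c:ℝ)⁻¹ else 0 := fun j => by
      by_cases h : cls j = istar <;> simp [hvdef, h, hvsq]
    simp only [h1]
    rw [← Finset.sum_filter, Finset.sum_const, nsmul_eq_mul, ← hcdef,
      mul_inv_cancel₀ hcne]
  set A : Matrix (Fin (n L)) (Fin N) ℝ := Matrix.of (fun i j => u i * v j) with hAdef
  obtain ⟨jstar, hjstar⟩ : ∃ j : Fin N, cls j = istar := by
    have h2 : 0 < c := hc1
    rw [hcdef] at h2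
    obtain ⟨j, hj⟩ := Finset.card_pos.mp h2
    exact ⟨j, (Finset.mem_filter.mp hj).2⟩
  have hAne : A ≠ 0 := by
    intro h
    have h3 : A istar jstar = (Real.sqrt c)⁻¹ := by
      show u istar * v jstar = _
      simp [hudef, hvdef, hjstar]
    rw [h] at h3
    simp only [Matrix.zero_apply] at h3
    exact absurd h3.symm (ne_of_gt (inv_pos.mpr hsqc))
  have hAfrob : frobNorm A = 1 := by
    have h1 : (∑ i, ∑ j, (A i j)^2) = (∑ i, u i ^2) * (∑ j, v j ^2) := by
      rw [Finset.sum_mul_sum]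
      refine Finset.sum_congr rfl fun i _ => Finset.sum_congr rfl fun j _ => ?_
      rw [hAdef]
      simp [mul_pow]
    rw [frobNorm, h1, hu2, hv2]
    norm_num
  set M : Matrix (Fin (n L)) (Fin N) ℝ := netZE σ L1 X θ L with hMdef
  -- δ lower bounds u ⬝ᵥ (M *ᵥ v)
  have hdotu : ∀ w : Fin (n L) → ℝ, u ⬝ᵥ w = w istar := by
    intro w
    simp only [dotProduct, hudef, ite_mul, one_mul, zero_mul]
    simp
  have hYuv : u ⬝ᵥ (Y *ᵥ v) = Real.sqrt c := by
    rw [hdotu]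
    have h1 : ∀ j : Fin N, Y istar j * v j
        = if cls j = istar then (Real.sqrt c)⁻¹ else 0 := by
      intro j
      by_cases h : cls j = istar
      · simp [hY, hvdef, h]
      · simp [hY, hvdef, h, Ne.symm h]
    simp only [Matrix.mulVec, dotProduct]
    rw [Finset.sum_congr rfl fun j _ => h1 j, ← Finset.sum_filter, Finset.sum_const,
      nsmul_eq_mul, ← hcdef]
    rw [inv_eq_one_div, mul_one_div, div_eq_iff (ne_of_gt hsqc),
      Real.mul_self_sqrt (by positivity)]
  have hEb : |u ⬝ᵥ ((M - Y) *ᵥ v)| ≤ ε1 := by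
    have h1 : (u ⬝ᵥ ((M - Y) *ᵥ v))^2 ≤ (∑ i, u i ^2) * ∑ i, ((M - Y) *ᵥ v) i ^2 := by
      simpa [dotProduct] using
        Finset.sum_mul_sq_le_sq_mul_sq Finset.univ u ((M - Y) *ᵥ v)
    have h2 : ∀ i, (((M - Y) *ᵥ v) i)^2 ≤ ∑ j, ((M - Y) i j)^2 := by
      intro i
      calc (((M - Y) *ᵥ v) i)^2 ≤ (∑ j, ((M - Y) i j)^2) * (∑ j, v j ^2) := by
            simpa [Matrix.mulVec, dotProduct] using
              Finset.sum_mul_sq_le_sq_mul_sq Finset.univ ((M - Y) i) v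
        _ = ∑ j, ((M - Y) i j)^2 := by rw [hv2, mul_one]
    have h3 : (u ⬝ᵥ ((M - Y) *ᵥ v))^2 ≤ frobNorm (M - Y) ^2 := by
      rw [frobNorm_sq]
      calc (u ⬝ᵥ ((M - Y) *ᵥ v))^2 ≤ (∑ i, u i ^2) * ∑ i, ((M - Y) *ᵥ v) i ^2 := h1
        _ = ∑ i, ((M - Y) *ᵥ v) i ^2 := by rw [hu2, one_mul]
        _ ≤ ∑ i, ∑ j, ((M - Y) i j)^2 := Finset.sum_le_sum fun i _ => h2 i
    have h4 : |u ⬝ᵥ ((M - Y) *ᵥ v)| ≤ frobNorm (M - Y) := by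
      rw [← Real.sqrt_sq_eq_abs]
      calc Real.sqrt ((u ⬝ᵥ ((M - Y) *ᵥ v))^2) ≤ Real.sqrt (frobNorm (M - Y) ^2) :=
            Real.sqrt_le_sqrt h3
        _ = frobNorm (M - Y) := Real.sqrt_sq (frobNorm_nonneg _)
    exact le_trans h4 (by rw [hMdef]; exact hA1)
  have hqδ : δ ≤ u ⬝ᵥ (M *ᵥ v) := by
    have hq1 : M *ᵥ v = Y *ᵥ v + (M - Y) *ᵥ v := by
      have h0 : Y + (M - Y) = M := by abel
      rw [← Matrix.add_mulVec, h0]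
    rw [hq1, dotProduct_add, hYuv]
    have h5 : -ε1 ≤ u ⬝ᵥ ((M - Y) *ᵥ v) := by
      have := abs_le.mp hEb
      linarith [this.1]
    rw [hδdef]
    linarith
  -- the tail product matrices
  obtain ⟨B, hB⟩ : ∃ B : (p : Fin L) → Matrix (Fin (n L)) (Fin (n (p.1+1))) ℝ,
      ∀ p : Fin L, L1 ≤ p.1 → ∀ ϑ : ParamSpace n L,
        (∀ q : Fin L, p.1+1 ≤ q.1 → WofE ϑ q = WofE θ q) →
        netZE σ L1 X ϑ L = B p * netZE σ L1 X ϑ (p.1+1) := by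
    refine ⟨fun p => if h : L1 ≤ p.1 then
        (netZE_tail σ L1 X θ (L - (p.1+1)) (p.1+1)
          (by have := p.isLt; omega) (by omega)).choose else 0,
      fun p hp ϑ hϑ => ?_⟩
    dsimp only
    rw [dif_pos hp]
    exact (netZE_tail σ L1 X θ (L - (p.1+1)) (p.1+1)
      (by have := p.isLt; omega) (by omega)).choose_spec ϑ hϑ
  set av : (p : Fin L) → Fin (n (p.1+1)) → ℝ := fun p => Matrix.vecMul u (B p) with havdef
  set zv : (p : Fin L) → Fin (n p.1) → ℝ := fun p => (netZE σ L1 X θ p.1).mulVec v with hzvdef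
  have hfact : ∀ p : Fin L, L1 ≤ p.1 →
      M = B p * (WofE θ p * netZE σ L1 X θ p.1) := by
    intro p hp
    have h1 := hB p hp θ (fun q _ => rfl)
    have h2 : netZE σ L1 X θ (p.1+1) = WofE θ p * netZE σ L1 X θ p.1 := by
      rw [netZE_succ, dif_pos p.isLt, if_neg (by omega)]
    rw [hMdef, h1, h2]
  have hqp : ∀ p : Fin L, L1 ≤ p.1 →
      u ⬝ᵥ (M *ᵥ v) = av p ⬝ᵥ (WofE θ p *ᵥ zv p) := by
    intro p hp
    rw [hfact p hp, ← Matrix.mulVec_mulVec, Matrix.dotProduct_mulVec,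
      ← Matrix.mulVec_mulVec]
  have hblock : ∀ p : Fin L, L1 ≤ p.1 →
      δ ≤ r * (Real.sqrt (∑ k, av p k ^ 2) * Real.sqrt (∑ t, zv p t ^ 2)) := by
    intro p hp
    have h1 : δ ≤ av p ⬝ᵥ (WofE θ p *ᵥ zv p) := by rw [← hqp p hp]; exact hqδ
    have h2 : av p ⬝ᵥ (WofE θ p *ᵥ zv p)
        ≤ Real.sqrt (∑ k, av p k ^2) * Real.sqrt (∑ k, (WofE θ p *ᵥ zv p) k ^2) := by
      have hcs := Finset.sum_mul_sq_le_sq_mul_sq Finset.univ (av p) (WofE θ p *ᵥ zv p)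
      have h3 : av p ⬝ᵥ (WofE θ p *ᵥ zv p) ≤ |av p ⬝ᵥ (WofE θ p *ᵥ zv p)| := le_abs_self _
      rw [← Real.sqrt_sq_eq_abs] at h3
      refine le_trans h3 ?_
      rw [← Real.sqrt_mul (by positivity)]
      exact Real.sqrt_le_sqrt (by simpa [dotProduct] using hcs)
    have h4 : Real.sqrt (∑ k, (WofE θ p *ᵥ zv p) k ^2)
        ≤ r * Real.sqrt (∑ t, zv p t ^2) :=
      le_trans (mulVec_sq_le (WofE θ p) (zv p))
        (mul_le_mul_of_nonneg_right (hW p hp) (Real.sqrt_nonneg _))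
    calc δ ≤ Real.sqrt (∑ k, av p k ^2) * Real.sqrt (∑ k, (WofE θ p *ᵥ zv p) k ^2) :=
          le_trans h1 h2
      _ ≤ Real.sqrt (∑ k, av p k ^2) * (r * Real.sqrt (∑ t, zv p t ^2)) :=
          mul_le_mul_of_nonneg_left h4 (Real.sqrt_nonneg _)
      _ = r * (Real.sqrt (∑ k, av p k ^2) * Real.sqrt (∑ t, zv p t ^2)) := by ring
  have hpbar : L1 ≤ (⟨L-1, by omega⟩ : Fin L).1 := by simp; omega
  have hrpos : 0 < r := by
    have h0 : 0 ≤ r := le_trans (opNorm_nonneg _) (hW _ hpbar)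
    rcases h0.lt_or_eq with h | h
    · exact h
    · exfalso
      have h1 := hblock _ hpbar
      rw [← h, zero_mul] at h1
      linarith
  have hαζ : ∀ p : Fin L, L1 ≤ p.1 →
      δ^2 / r^2 ≤ (∑ k, av p k ^2) * (∑ t, zv p t ^2) := by
    intro p hp
    rw [div_le_iff₀ (by positivity)]
    calc δ^2 ≤ (r * (Real.sqrt (∑ k, av p k ^2) * Real.sqrt (∑ t, zv p t ^2)))^2 :=
          pow_le_pow_left₀ (le_of_lt hδpos) (hblock p hp) 2
      _ = (∑ k, av p k ^2) * (∑ t, zv p t ^2) * r^2 := by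
          rw [mul_pow, mul_pow, Real.sq_sqrt (by positivity), Real.sq_sqrt (by positivity)]
          ring
  -- the gradient
  set f : ParamSpace n L → ℝ :=
    fun ϑ => Matrix.trace (netZE σ L1 X ϑ L * Aᵀ) with hfdef
  have hfsum : f = fun ϑ => ∑ x : Fin (n L) × Fin N, netZE σ L1 X ϑ L x.1 x.2 * A x.1 x.2 := by
    funext ϑ
    rw [hfdef]
    exact trace_mul_transpose_eq _ _
  have hfdiff : Differentiable ℝ f := by
    rw [hfsum]
    exact Differentiable.fun_sum fun x _ => (diff_netZE σ L1 X hσ L x.1 x.2).mul_const _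
  set g : ParamSpace n L := gradient f θ with hgdef
  have hsingle : ∀ (p0 : Fin L), L1 ≤ p0.1 →
      ∀ D : EuclideanSpace ℝ (Fin (n (p0.1+1)) × Fin (n p0.1)),
      (inner ℝ (g p0) D : ℝ) = av p0 ⬝ᵥ ((Matrix.of fun k t' => D (k, t')) *ᵥ zv p0) := by
    intro p0 hp0 D
    set sing : ParamSpace n L :=
      WithLp.toLp 2 (Pi.single (M := fun p : Fin L => EuclideanSpace ℝ (Fin (n (p.1 + 1)) × Fin (n p.1))) p0 D)
      with hsing
    have hsp : sing p0 = D := by rw [hsing]; simp [Pi.single, Function.update]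
    have hs0 : ∀ q : Fin L, q ≠ p0 → sing q = 0 := by
      intro q hq
      rw [hsing]
      simp [Pi.single, Function.update, hq]
    have hinner1 : (inner ℝ g sing : ℝ) = (inner ℝ (g p0) D : ℝ) := by
      rw [PiLp.inner_apply]
      rw [Finset.sum_eq_single p0]
      · rw [hsp]
      · intro b _ hb
        rw [hs0 b hb, inner_zero_right]
      · intro h; exact absurd (Finset.mem_univ p0) h
    have hinner2 : (inner ℝ g sing : ℝ) = fderiv ℝ f θ sing := by
      rw [hgdef]
      exact inner_gradient' f θ sing
    set Dmat : Matrix (Fin (n (p0.1+1))) (Fin (n p0.1)) ℝ :=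
      Matrix.of fun k t' => D (k, t') with hDmatdef
    have hdir : fderiv ℝ f θ sing
        = Matrix.trace ((B p0 * (Dmat * netZE σ L1 X θ p0.1)) * Aᵀ) := by
      apply fderiv_dir f θ sing (hfdiff θ)
        (Matrix.trace ((B p0 * (WofE θ p0 * netZE σ L1 X θ p0.1)) * Aᵀ))
      intro t
      have hW1 : ∀ q : Fin L, q ≠ p0 → WofE (θ + t • sing) q = WofE θ q := by
        intro q hq
        ext i j
        show θ q (i,j) + t * sing q (i,j) = θ q (i,j)
        rw [hs0 q hq]
        show θ q (i,j) + t * 0 = θ q (i,j)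
        ring
      have hW2 : WofE (θ + t • sing) p0 = WofE θ p0 + t • Dmat := by
        ext i j
        show θ p0 (i,j) + t * sing p0 (i,j) = WofE θ p0 i j + t * Dmat i j
        rw [hsp]
        rfl
      have hZ0 : netZE σ L1 X (θ + t • sing) p0.1 = netZE σ L1 X θ p0.1 :=
        netZE_congr σ L1 X _ θ p0.1 (fun q hq => hW1 q (by
          intro he; rw [he] at hq; omega))
      have hLfull : netZE σ L1 X (θ + t • sing) L
          = B p0 * netZE σ L1 X (θ + t • sing) (p0.1+1) :=
        hB p0 hp0 _ (fun q hq => hW1 q (by intro he; rw [he] at hq; omega))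
      have hstep : netZE σ L1 X (θ + t • sing) (p0.1+1)
          = (WofE θ p0 + t • Dmat) * netZE σ L1 X θ p0.1 := by
        rw [netZE_succ, dif_pos p0.isLt, if_neg (by omega)]
        have hW2' : WofE (θ + t • sing) ⟨p0.1, p0.isLt⟩ = WofE θ p0 + t • Dmat := hW2
        rw [hW2', hZ0]
      simp only [hfdef]
      rw [hLfull, hstep]
      have hexp : B p0 * ((WofE θ p0 + t • Dmat) * netZE σ L1 X θ p0.1)
          = B p0 * (WofE θ p0 * netZE σ L1 X θ p0.1)
            + t • (B p0 * (Dmat * netZE σ L1 X θ p0.1)) := by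
        rw [Matrix.add_mul, Matrix.mul_add, Matrix.smul_mul, Matrix.mul_smul]
      rw [hexp, Matrix.add_mul, Matrix.smul_mul, Matrix.trace_add, Matrix.trace_smul,
        smul_eq_mul]
    have htr2 : Matrix.trace ((B p0 * (Dmat * netZE σ L1 X θ p0.1)) * Aᵀ)
        = av p0 ⬝ᵥ (Dmat *ᵥ zv p0) := by
      rw [hAdef, trace_outer, ← Matrix.mulVec_mulVec, Matrix.dotProduct_mulVec,
        ← Matrix.mulVec_mulVec]
    rw [← hinner1, hinner2, hdir, htr2]
  -- per-block lower bound on the gradient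
  have hgp : ∀ p : Fin L, L1 ≤ p.1 → δ^2/r^2 ≤ ‖g p‖^2 := by
    intro p hp
    set Gp : EuclideanSpace ℝ (Fin (n (p.1+1)) × Fin (n p.1)) :=
      WithLp.toLp 2 (fun kt : Fin (n (p.1+1)) × Fin (n p.1) => av p kt.1 * zv p kt.2) with hGpdef
    have key : (inner ℝ (g p) Gp : ℝ)
        = (∑ k, av p k ^2) * (∑ t, zv p t ^2) := by
      have k1 := hsingle p hp Gp
      rw [k1]
      have k2 : (Matrix.of fun k t' => Gp (k, t'))
          = (Matrix.of fun k t' => av p k * zv p t') := rfl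
      rw [k2, dot_outer_mulVec (av p) (zv p)]
    have hDn : ‖Gp‖^2 = (∑ k, av p k ^2) * (∑ t, zv p t ^2) := by
      rw [euclid_norm_sq, Fintype.sum_prod_type, Finset.sum_mul_sum]
      refine Finset.sum_congr rfl fun k _ => Finset.sum_congr rfl fun t _ => ?_
      have k3 : Gp (k, t) = av p k * zv p t := rfl
      rw [k3]
      ring
    have hle : (inner ℝ (g p) Gp : ℝ) ≤ ‖g p‖ * ‖Gp‖ := real_inner_le_norm _ _
    have hαζp := hαζ p hp
    have hPpos : 0 < (∑ k, av p k ^2) * (∑ t, zv p t ^2) :=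
      lt_of_lt_of_le (div_pos (pow_pos hδpos 2) (pow_pos hrpos 2)) hαζp
    have hGpos : 0 < ‖Gp‖ := by
      rcases (norm_nonneg Gp).lt_or_eq with h | h
      · exact h
      · exfalso
        rw [← h] at hDn
        rw [show ((0:ℝ))^2 = 0 from by norm_num] at hDn
        rw [← hDn] at hPpos
        exact lt_irrefl 0 hPpos
    have h2 : ‖Gp‖ ≤ ‖g p‖ := by
      have h3 : ‖Gp‖ * ‖Gp‖ ≤ ‖g p‖ * ‖Gp‖ := by
        have h4 : ‖Gp‖ * ‖Gp‖ = (∑ k, av p k ^2) * (∑ t, zv p t ^2) := by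
          rw [← pow_two, hDn]
        rw [h4, ← key]
        exact hle
      exact le_of_mul_le_mul_right h3 hGpos
    calc δ^2/r^2 ≤ (∑ k, av p k ^2) * (∑ t, zv p t ^2) := hαζp
      _ = ‖Gp‖^2 := hDn.symm
      _ ≤ ‖g p‖^2 := pow_le_pow_left₀ (norm_nonneg Gp) h2 2
  -- summing over the linear layers
  have hcard : (Finset.univ.filter (fun p : Fin L => L1 ≤ p.1)).card = L2 := by
    rw [Finset.card_filter]
    rw [Fin.sum_univ_eq_sum_range (fun i => if L1 ≤ i then 1 else 0) L]
    rw [Finset.range_eq_Ico, ← Finset.sum_Ico_consecutive _ (Nat.zero_le L1)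
      (by omega : L1 ≤ L)]
    have h1 : (∑ i ∈ Finset.Ico 0 L1, if L1 ≤ i then 1 else 0) = 0 :=
      Finset.sum_eq_zero fun i hi => if_neg (by
        rw [Finset.mem_Ico] at hi; omega)
    have h2 : (∑ i ∈ Finset.Ico L1 L, if L1 ≤ i then 1 else 0) = L2 := by
      rw [Finset.sum_congr rfl fun i hi => if_pos (by
        rw [Finset.mem_Ico] at hi; omega)]
      rw [Finset.sum_const, Nat.card_Ico, smul_eq_mul, mul_one]
      omega
    rw [h1, h2, zero_add]
  have hgnorm2 : (L2:ℝ) * (δ^2/r^2) ≤ ‖g‖^2 := by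
    rw [PiLp.norm_sq_eq_of_L2]
    calc (L2:ℝ) * (δ^2/r^2)
        = ∑ _p ∈ Finset.univ.filter (fun p : Fin L => L1 ≤ p.1), δ^2/r^2 := by
          rw [Finset.sum_const, hcard, nsmul_eq_mul]
      _ ≤ ∑ p ∈ Finset.univ.filter (fun p : Fin L => L1 ≤ p.1), ‖g p‖^2 :=
          Finset.sum_le_sum fun p hp => hgp p (Finset.mem_filter.mp hp).2
      _ ≤ ∑ p, ‖g p‖^2 :=
          Finset.sum_le_sum_of_subset_of_nonneg (Finset.filter_subset _ _)
            (fun p _ _ => sq_nonneg _)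
  -- an upper bound valid for every element of the NTK set
  have hCbound : ∀ A' : Matrix (Fin (n L)) (Fin N) ℝ,
      ‖gradient (fun ϑ => Matrix.trace (netZE σ L1 X ϑ L * A'ᵀ)) θ‖^2
        ≤ (∑ x : Fin (n L) × Fin N, (A' x.1 x.2)^2)
          * (∑ x : Fin (n L) × Fin N,
              ‖gradient (fun ϑ => netZE σ L1 X ϑ L x.1 x.2) θ‖^2) := by
    intro A'
    have hre : (fun ϑ : ParamSpace n L => Matrix.trace (netZE σ L1 X ϑ L * A'ᵀ))
        = fun ϑ => ∑ x : Fin (n L) × Fin N, netZE σ L1 X ϑ L x.1 x.2 * A' x.1 x.2 :=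
      funext fun ϑ => trace_mul_transpose_eq _ _
    have hfd : ∀ x : Fin (n L) × Fin N,
        DifferentiableAt ℝ (fun ϑ : ParamSpace n L => netZE σ L1 X ϑ L x.1 x.2) θ :=
      fun x => (diff_netZE σ L1 X hσ L x.1 x.2) θ
    have hgr : gradient (fun ϑ : ParamSpace n L => Matrix.trace (netZE σ L1 X ϑ L * A'ᵀ)) θ
        = ∑ x : Fin (n L) × Fin N,
            A' x.1 x.2 • gradient (fun ϑ => netZE σ L1 X ϑ L x.1 x.2) θ := by
      rw [hre]
      show (InnerProductSpace.toDual ℝ (ParamSpace n L)).symm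
          (fderiv ℝ (fun ϑ : ParamSpace n L =>
            ∑ x : Fin (n L) × Fin N, netZE σ L1 X ϑ L x.1 x.2 * A' x.1 x.2) θ)
        = ∑ x : Fin (n L) × Fin N,
            A' x.1 x.2 • gradient (fun ϑ => netZE σ L1 X ϑ L x.1 x.2) θ
      rw [fderiv_fun_sum (fun x _ => (hfd x).mul_const _)]
      rw [Finset.sum_congr rfl (fun (x : Fin (n L) × Fin N) _ =>
        fderiv_mul_const (hfd x) (A' x.1 x.2))]
      rw [map_sum]
      refine Finset.sum_congr rfl fun x _ => ?_
      rw [_root_.map_smul]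
      rfl
    rw [hgr]
    have hn1 : ‖∑ x : Fin (n L) × Fin N,
          A' x.1 x.2 • gradient (fun ϑ => netZE σ L1 X ϑ L x.1 x.2) θ‖
        ≤ ∑ x : Fin (n L) × Fin N,
            |A' x.1 x.2| * ‖gradient (fun ϑ => netZE σ L1 X ϑ L x.1 x.2) θ‖ := by
      refine le_trans (norm_sum_le _ _) (Finset.sum_le_sum fun x _ => ?_)
      rw [norm_smul, Real.norm_eq_abs]
    have hcs := Finset.sum_mul_sq_le_sq_mul_sq Finset.univ
      (fun x : Fin (n L) × Fin N => |A' x.1 x.2|)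
      (fun x : Fin (n L) × Fin N => ‖gradient (fun ϑ => netZE σ L1 X ϑ L x.1 x.2) θ‖)
    calc ‖∑ x : Fin (n L) × Fin N,
          A' x.1 x.2 • gradient (fun ϑ => netZE σ L1 X ϑ L x.1 x.2) θ‖^2
        ≤ (∑ x : Fin (n L) × Fin N,
            |A' x.1 x.2| * ‖gradient (fun ϑ => netZE σ L1 X ϑ L x.1 x.2) θ‖)^2 :=
          pow_le_pow_left₀ (norm_nonneg _) hn1 2
      _ ≤ (∑ x : Fin (n L) × Fin N, |A' x.1 x.2|^2)
          * (∑ x : Fin (n L) × Fin N,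
              ‖gradient (fun ϑ => netZE σ L1 X ϑ L x.1 x.2) θ‖^2) := hcs
      _ = (∑ x : Fin (n L) × Fin N, (A' x.1 x.2)^2)
          * (∑ x : Fin (n L) × Fin N,
              ‖gradient (fun ϑ => netZE σ L1 X ϑ L x.1 x.2) θ‖^2) := by
          simp [sq_abs]
  -- the NTK set and its supremum
  set C : ℝ := ∑ x : Fin (n L) × Fin N,
    ‖gradient (fun ϑ => netZE σ L1 X ϑ L x.1 x.2) θ‖^2 with hCdef
  set S : Set ℝ := {x : ℝ | ∃ A' : Matrix (Fin (n L)) (Fin N) ℝ, A' ≠ 0 ∧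
    x = ‖gradient (fun ϑ => Matrix.trace (netZE σ L1 X ϑ L * A'ᵀ)) θ‖ ^ 2 / frobNorm A' ^ 2}
    with hSdef
  have hNTK : NTKop n L N σ L1 X θ = sSup S := by rw [hSdef]; rfl
  have hbdd : BddAbove S := by
    refine ⟨C, ?_⟩
    rw [hSdef]
    rintro x ⟨A', hA', rfl⟩
    have hfrob : frobNorm A' ^2 = ∑ x : Fin (n L) × Fin N, (A' x.1 x.2)^2 := by
      rw [frobNorm_sq]
      exact (Fintype.sum_prod_type
        (f := fun x : Fin (n L) × Fin N => A' x.1 x.2 ^ 2)).symm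
    have hpos : 0 < frobNorm A' ^2 := by
      rw [hfrob]
      have hex : ∃ x : Fin (n L) × Fin N, A' x.1 x.2 ≠ 0 := by
        by_contra h
        push_neg at h
        exact hA' (by ext i j; exact h (i, j))
      obtain ⟨x0, hx0⟩ := hex
      refine Finset.sum_pos' (fun y _ => sq_nonneg _) ⟨x0, Finset.mem_univ _, ?_⟩
      exact lt_of_le_of_ne (sq_nonneg _) (Ne.symm (pow_ne_zero 2 hx0))
    rw [div_le_iff₀ hpos]
    calc ‖gradient (fun ϑ => Matrix.trace (netZE σ L1 X ϑ L * A'ᵀ)) θ‖^2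
        ≤ (∑ x : Fin (n L) × Fin N, (A' x.1 x.2)^2) * C := hCbound A'
      _ = C * frobNorm A' ^2 := by rw [hfrob]; ring
  have hmem : ‖gradient (fun ϑ => Matrix.trace (netZE σ L1 X ϑ L * Aᵀ)) θ‖ ^ 2
      / frobNorm A ^ 2 ∈ S := by
    rw [hSdef]
    exact ⟨A, hAne, rfl⟩
  have hle := le_csSup hbdd hmem
  have hgg : ‖gradient (fun ϑ => Matrix.trace (netZE σ L1 X ϑ L * Aᵀ)) θ‖ ^ 2
      / frobNorm A ^ 2 = ‖g‖^2 := by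
    rw [← hfdef, ← hgdef, hAfrob]
    norm_num
  rw [hNTK]
  have hKpos : (0:ℝ) < (K:ℝ) := by exact_mod_cast hK1
  calc δ ^ 2 * (L2:ℝ) / ((K : ℝ) ^ 2 * r ^ 2)
      ≤ δ ^ 2 * (L2:ℝ) / r ^ 2 := by
        rw [div_le_div_iff₀ (mul_pos (pow_pos hKpos 2) (pow_pos hrpos 2)) (pow_pos hrpos 2)]
        have h9 : (1:ℝ) ≤ (K:ℝ)^2 := by
          have h8 : (1:ℝ) ≤ (K:ℝ) := by exact_mod_cast hK1
          nlinarith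
        nlinarith [mul_le_mul_of_nonneg_left h9
          (show (0:ℝ) ≤ δ^2 * (L2:ℝ) * r^2 by positivity)]
    _ = (L2:ℝ) * (δ^2 / r^2) := by ring
    _ ≤ ‖g‖^2 := hgnorm2
    _ = ‖gradient (fun ϑ => Matrix.trace (netZE σ L1 X ϑ L * Aᵀ)) θ‖ ^ 2
          / frobNorm A ^ 2 := hgg.symm
    _ ≤ sSup S := hle
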